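/- Continuity of cycle-length formulas at Δ = δ₂: T̃ + ln(1 + (a(e^{σ}-1)/β_U)e^{δ₂ - z̃₂}) equals T̃ + ln(1 - (a(e^{σ}-1)/β_L)e^{δ₂ - z̃₁ - T̃} - (a(β_L+β_U)e^{-z̃₁}/(β_L(β_U - a)))(e^{δ₂ - z̃₂} - 1)), and both are strictly greater than T̃. -/

import Mathlib

open Real

theorem stmt13 (τ σ βL βU a z1 z2 Tper δ2 : ℝ)
    (hτ : 0 < τ) (hσ : 0 < σ) (hστ : σ ≤ τ)
    (hβL : 0 < βL) (hβU : 0 < βU) (ha : 0 < a) (haU : a < βU)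
    (hz1 : z1 = log ((βL + βU * (1 - exp (-τ))) / βL))
    (hz2 : z2 = z1 + τ + log ((βL * (1 - exp (-τ)) + βU) / βU))
    (hT : Tper = z2 + τ)
    (hδ2 : δ2 = z2 - σ + log (βU / (βU - a * (1 - exp (-σ))))) :
    Tper + log (1 + a * (exp σ - 1) / βU * exp (δ2 - z2)) =
      Tper + log (1 - a * (exp σ - 1) / βL * exp (δ2 - z1 - Tper) -
        a * (βL + βU) * exp (-z1) / (βL * (βU - a)) * (exp (δ2 - z2) - 1)) ∧
    Tper < Tper + log (1 + a * (exp σ - 1) / βU * exp (δ2 - z2)) := by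
  have hu0 : 0 < exp (-σ) := exp_pos _
  have hr0 : 0 < exp (-τ) := exp_pos _
  have hu1 : exp (-σ) < 1 := exp_lt_one_iff.mpr (by linarith)
  have hr1 : exp (-τ) < 1 := exp_lt_one_iff.mpr (by linarith)
  have hq1 : 1 < exp σ := by
    have h := exp_lt_exp.mpr hσ
    simpa using h
  have hqu : exp σ * exp (-σ) = 1 := by rw [← exp_add]; simp
  have hA : 0 < βL + βU * (1 - exp (-τ)) := by nlinarith
  have hD : 0 < βU - a * (1 - exp (-σ)) := by nlinarith
  have hBa : 0 < βU - a := by linarith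
  have hE1 : exp (δ2 - z2) = exp (-σ) * (βU / (βU - a * (1 - exp (-σ)))) := by
    have h : δ2 - z2 = -σ + log (βU / (βU - a * (1 - exp (-σ)))) := by rw [hδ2]; ring
    rw [h, exp_add, exp_log (div_pos hβU hD)]
  have hez1 : exp (-z1) = βL / (βL + βU * (1 - exp (-τ))) := by
    rw [hz1, ← log_inv, exp_log]
    · rw [inv_div]
    · positivity
  have hE2 : exp (δ2 - z1 - Tper) =
      exp (-σ) * (βU / (βU - a * (1 - exp (-σ)))) *
        (βL / (βL + βU * (1 - exp (-τ)))) * exp (-τ) := by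
    have h : δ2 - z1 - Tper = (δ2 - z2) + (-z1) + (-τ) := by rw [hT]; ring
    rw [h, exp_add, exp_add, hE1, hez1]
  have hqs : exp σ = 1 / exp (-σ) := by field_simp; linarith [hqu]
  have key1 : 1 + a * (exp σ - 1) / βU * exp (δ2 - z2) =
      βU / (βU - a * (1 - exp (-σ))) := by
    rw [hE1, hqs]
    field_simp
    ring
  have key2 : 1 - a * (exp σ - 1) / βL * exp (δ2 - z1 - Tper) -
        a * (βL + βU) * exp (-z1) / (βL * (βU - a)) * (exp (δ2 - z2) - 1) =
      βU / (βU - a * (1 - exp (-σ))) := by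
    rw [hE1, hE2, hez1, hqs]
    field_simp
    ring
  constructor
  · rw [key1, key2]
  · have h1 : 1 < 1 + a * (exp σ - 1) / βU * exp (δ2 - z2) := by
      have h2 : 0 < a * (exp σ - 1) / βU * exp (δ2 - z2) := by
        apply mul_pos
        · apply div_pos <;> nlinarith
        · exact exp_pos _
      linarith
    linarith [log_pos h1]
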